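/- Let F be a field, Γ an additive abelian group, ε a skew-symmetric bicharacter of Γ, A a Γ-graded associative unital F-algebra, and D a set of homogeneous color derivations of A. Let χ : D → F be a function with χ(∂) = 0 whenever ∂ ∈ D has nonzero degree. Then for every m ∈ ℕ the generalized weight space A(χ)^{(m)} is a Γ-graded subspace of A, i.e. the homogeneous components of any element of A(χ)^{(m)} again lie in A(χ)^{(m)}. -/

import Mathlib

lemma decompose_shift {F : Type*} [Field F] {Γ : Type*} [AddCommGroup Γ] [DecidableEq Γ]
    {A : Type*} [Ring A] [Algebra F A]
    (𝒜 : Γ → Submodule F A) [GradedAlgebra 𝒜] (d : Module.End F A) (lam : Γ)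
    (hd : ∀ μ : Γ, ∀ a ∈ 𝒜 μ, d a ∈ 𝒜 (lam + μ)) (u : A) (γ : Γ) :
    (DirectSum.decompose 𝒜 (d u) (lam + γ) : A) = d (DirectSum.decompose 𝒜 u γ) := by
  induction u using DirectSum.Decomposition.inductionOn 𝒜 with
  | zero => simp
  | homogeneous x =>
      rename_i i
      by_cases h : i = γ
      · subst h
        rw [DirectSum.decompose_of_mem_same 𝒜 (hd i x x.2),
          DirectSum.decompose_of_mem_same 𝒜 x.2]
      · rw [DirectSum.decompose_of_mem_ne 𝒜 (hd i x x.2)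
            (fun hc => h (add_left_cancel hc)),
          DirectSum.decompose_of_mem_ne 𝒜 x.2 h, map_zero]
  | add a b ha hb =>
      rw [map_add, DirectSum.decompose_add, DirectSum.add_apply, Submodule.coe_add,
        ha, hb, DirectSum.decompose_add, DirectSum.add_apply, Submodule.coe_add, map_add]

lemma decompose_shift_op {F : Type*} [Field F] {Γ : Type*} [AddCommGroup Γ] [DecidableEq Γ]
    {A : Type*} [Ring A] [Algebra F A]
    (𝒜 : Γ → Submodule F A) [GradedAlgebra 𝒜] (d : Module.End F A) (lam : Γ)
    (hd : ∀ μ : Γ, ∀ a ∈ 𝒜 μ, d a ∈ 𝒜 (lam + μ)) (c : F)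
    (hc : lam ≠ 0 → c = 0) (u : A) (γ : Γ) :
    d (DirectSum.decompose 𝒜 u γ : A) - c • (DirectSum.decompose 𝒜 u γ : A)
      = DirectSum.decompose 𝒜 (d u - c • u) (lam + γ) := by
  rw [DirectSum.decompose_sub, DirectSum.sub_apply, Submodule.coe_sub,
    decompose_shift 𝒜 d lam hd u γ]
  congr 1
  by_cases h : lam = 0
  · subst h
    rw [zero_add, DirectSum.decompose_smul, DirectSum.smul_apply, Submodule.coe_smul]
  · rw [hc h]
    simp




/-- `d` is a homogeneous color derivation of degree `lam` of the `Γ`-graded algebra `A`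
(with grading `𝒜`) relative to the bicharacter `ε`. -/
def IsHomColorDer {F : Type*} [Field F] {Γ : Type*} [AddCommGroup Γ]
    {A : Type*} [Ring A] [Algebra F A]
    (ε : Γ → Γ → F) (𝒜 : Γ → Submodule F A) (lam : Γ) (d : Module.End F A) : Prop :=
  (∀ μ : Γ, ∀ a ∈ 𝒜 μ, d a ∈ 𝒜 (lam + μ)) ∧
  (∀ (l m : Γ) (a b : A), a ∈ 𝒜 l → b ∈ 𝒜 m →
    d (a * b) = d a * b + ε lam l • (a * d b))

/-- The generalized weight space `A(χ)^{(m)}`: the set of `u ∈ A` killed by every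
composition `(d₁ − χ(d₁))∘⋯∘(d_{m+1} − χ(d_{m+1}))` with `d₁,…,d_{m+1} ∈ D`. -/
def wtSpace {F : Type*} [Field F] {A : Type*} [Ring A] [Algebra F A]
    (D : Set (Module.End F A)) (χ : Module.End F A → F) : ℕ → Set A
  | 0 => {u : A | ∀ d ∈ D, d u - χ d • u = 0}
  | n + 1 => {u : A | ∀ d ∈ D, d u - χ d • u ∈ wtSpace D χ n}

/-- For a function `χ : D → F` vanishing on derivations of nonzero
degree, each generalized weight space `A(χ)^{(m)}` is a `Γ`-graded subspace of `A`:
the homogeneous components of any of its elements again lie in it. -/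
theorem wtSpace_graded
    {F : Type*} [Field F] {Γ : Type*} [AddCommGroup Γ] [DecidableEq Γ]
    {A : Type*} [Ring A] [Algebra F A]
    (ε : Γ → Γ → F)
    (hskew : ∀ l m : Γ, ε l m * ε m l = 1)
    (hmul : ∀ l m n : Γ, ε l (m + n) = ε l m * ε l n)
    (𝒜 : Γ → Submodule F A) [GradedAlgebra 𝒜]
    (D : Set (Module.End F A)) (deg : Module.End F A → Γ)
    (hD : ∀ d ∈ D, IsHomColorDer ε 𝒜 (deg d) d)
    (χ : Module.End F A → F)
    (hχ : ∀ d ∈ D, deg d ≠ 0 → χ d = 0) :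
    ∀ (m : ℕ) (u : A), u ∈ wtSpace D χ m → ∀ γ : Γ,
      (DirectSum.decompose 𝒜 u γ : A) ∈ wtSpace D χ m := by
  intro m
  induction m with
  | zero =>
      intro u hu γ d hdD
      rw [decompose_shift_op 𝒜 d (deg d) (hD d hdD).1 (χ d) (hχ d hdD) u γ,
        hu d hdD]
      simp
  | succ n ih =>
      intro u hu γ d hdD
      rw [decompose_shift_op 𝒜 d (deg d) (hD d hdD).1 (χ d) (hχ d hdD) u γ]
      exact ih (d u - χ d • u) (hu d hdD) (deg d + γ)
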